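/- arXiv:math/0612612 — 2 statements merged into one kernel-verified Lean document; each statement's English description precedes it below -/
import Mathlib

section
/- Let σ = (√5 − 1)/2 and define S_n = σ^(n−5)·((4n−2)σ + 3 − 2n). Then S_8 > 1 and S_9 < 1. -/
noncomputable def σ : ℝ := (Real.sqrt 5 - 1) / 2

noncomputable def S (n : ℕ) : ℝ := σ ^ ((n : ℤ) - 5) * ((4 * (n : ℝ) - 2) * σ + 3 - 2 * n)

theorem stmt_10 : S 8 > 1 ∧ S 9 < 1 := by
  have hs : Real.sqrt 5 ^ 2 = 5 := Real.sq_sqrt (by norm_num)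
  have h1 : (2.236 : ℝ) < Real.sqrt 5 := by
    nlinarith [Real.sqrt_nonneg 5, hs]
  have h2 : Real.sqrt 5 < 2.2361 := by
    nlinarith [Real.sqrt_nonneg 5, hs]
  have hs3 : Real.sqrt 5 ^ 3 = 5 * Real.sqrt 5 := by
    rw [pow_succ, hs]
  constructor
  · show σ ^ ((8 : ℤ) - 5) * ((4 * (8 : ℝ) - 2) * σ + 3 - 2 * 8) > 1
    norm_num [σ, zpow_ofNat]
    nlinarith [hs, h1, h2, hs3, Real.sqrt_nonneg 5]
  · show σ ^ ((9 : ℤ) - 5) * ((4 * (9 : ℝ) - 2) * σ + 3 - 2 * 9) < 1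
    norm_num [σ, zpow_ofNat]
    nlinarith [hs, h1, h2, hs3, Real.sqrt_nonneg 5]
end

section
/- Let σ = (√5 − 1)/2. Then σ⁷·(13 + 17σ + 15σ²) − 1 = σ¹¹ + σ¹³. -/
theorem stmt_14 : σ ^ 7 * (13 + 17 * σ + 15 * σ ^ 2) - 1 = σ ^ 11 + σ ^ 13 := by
  have h5 : Real.sqrt 5 ^ 2 = 5 := Real.sq_sqrt (by norm_num)
  have h : σ ^ 2 + σ = 1 := by
    unfold σ; ring_nf; nlinarith [h5]
  linear_combination (-σ^11 + σ^10 - 3*σ^9 + 4*σ^8 + 8*σ^7 + 13*σ^6 + 8*σ^5 + 5*σ^4 + 3*σ^3 + 2*σ^2 + σ + 1) * h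
end
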